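/- In the 4-player game of the previous context (u_1 rewards a_1=a_2; u_2 rewards (a_1=a_2) XOR (a_3=a_4=1); u_3 = u_4 reward a_3=a_4), for every profile a with a_3 = a_4, players 3 and 4 are both best-replying at a, and the unique best replies of players 3 and 4 at a are a_3 and a_4 respectively. Consequently, any dynamics in which best-replying players never change their action can never leave the set {a : a_3 = a_4 = 1} when started at a profile with a_3 = a_4 = 1, and in particular can never reach the unique PNE (2,2,2,2) from (1,1,1,1). -/

import Mathlib

/-- In the 4-player game of Lemma 14 (encoded with `Fin`, action `m` is index
`m-1`): at any profile with `a₃ = a₄`, players 3 and 4 are best-replying and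
their unique best replies are `a₃` and `a₄`; consequently, any dynamics in
which best-replying players never change their action stays inside the set
`{a : a₃ = a₄ = 1}` when started there, and in particular the unique PNE
`(2,2,2,2)` is unreachable from `(1,1,1,1)`. -/
theorem stmt4 (k ℓ : ℕ) (hk : 2 ≤ k) (hl : 2 ≤ ℓ)
    (u1 u2 u3 u4 : Fin 2 × Fin 2 × Fin k × Fin ℓ → ℝ)
    (hu1 : ∀ a, u1 a = if (a.1 : ℕ) = (a.2.1 : ℕ) then 1 else 0)
    (hu2 : ∀ a, u2 a =
      if Xor ((a.1 : ℕ) = (a.2.1 : ℕ)) ((a.2.2.1 : ℕ) = 0 ∧ (a.2.2.2 : ℕ) = 0)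
      then 1 else 0)
    (hu3 : ∀ a, u3 a = if (a.2.2.1 : ℕ) = (a.2.2.2 : ℕ) then 1 else 0)
    (hu4 : ∀ a, u4 a = if (a.2.2.1 : ℕ) = (a.2.2.2 : ℕ) then 1 else 0)
    (step : (Fin 2 × Fin 2 × Fin k × Fin ℓ) → (Fin 2 × Fin 2 × Fin k × Fin ℓ) → Prop)
    (hstep : ∀ a b, step a b →
      ((∀ x : Fin 2, u1 (x, a.2.1, a.2.2.1, a.2.2.2) ≤ u1 a) → b.1 = a.1) ∧
      ((∀ y : Fin 2, u2 (a.1, y, a.2.2.1, a.2.2.2) ≤ u2 a) → b.2.1 = a.2.1) ∧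
      ((∀ z : Fin k, u3 (a.1, a.2.1, z, a.2.2.2) ≤ u3 a) → b.2.2.1 = a.2.2.1) ∧
      ((∀ w : Fin ℓ, u4 (a.1, a.2.1, a.2.2.1, w) ≤ u4 a) → b.2.2.2 = a.2.2.2)) :
    (∀ a : Fin 2 × Fin 2 × Fin k × Fin ℓ, (a.2.2.1 : ℕ) = (a.2.2.2 : ℕ) →
      (∀ z : Fin k, u3 (a.1, a.2.1, z, a.2.2.2) ≤ u3 a) ∧
      (∀ w : Fin ℓ, u4 (a.1, a.2.1, a.2.2.1, w) ≤ u4 a) ∧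
      (∀ z : Fin k,
        (∀ z' : Fin k, u3 (a.1, a.2.1, z', a.2.2.2) ≤ u3 (a.1, a.2.1, z, a.2.2.2)) ↔
          z = a.2.2.1) ∧
      (∀ w : Fin ℓ,
        (∀ w' : Fin ℓ, u4 (a.1, a.2.1, a.2.2.1, w') ≤ u4 (a.1, a.2.1, a.2.2.1, w)) ↔
          w = a.2.2.2)) ∧
    (∀ a b : Fin 2 × Fin 2 × Fin k × Fin ℓ,
      (a.2.2.1 : ℕ) = 0 → (a.2.2.2 : ℕ) = 0 →
      Relation.ReflTransGen step a b →
      (b.2.2.1 : ℕ) = 0 ∧ (b.2.2.2 : ℕ) = 0) ∧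
    ¬ Relation.ReflTransGen step (0, 0, ⟨0, by omega⟩, ⟨0, by omega⟩)
        (1, 1, ⟨1, hk⟩, ⟨1, hl⟩) := by

  have key : ∀ a : Fin 2 × Fin 2 × Fin k × Fin ℓ, (a.2.2.1 : ℕ) = (a.2.2.2 : ℕ) →
      (∀ z : Fin k, u3 (a.1, a.2.1, z, a.2.2.2) ≤ u3 a) ∧
      (∀ w : Fin ℓ, u4 (a.1, a.2.1, a.2.2.1, w) ≤ u4 a) ∧
      (∀ z : Fin k,
        (∀ z' : Fin k, u3 (a.1, a.2.1, z', a.2.2.2) ≤ u3 (a.1, a.2.1, z, a.2.2.2)) ↔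
          z = a.2.2.1) ∧
      (∀ w : Fin ℓ,
        (∀ w' : Fin ℓ, u4 (a.1, a.2.1, a.2.2.1, w') ≤ u4 (a.1, a.2.1, a.2.2.1, w)) ↔
          w = a.2.2.2) := by
    intro a ha
    have hzk : (a.2.2.2 : ℕ) < k := ha ▸ a.2.2.1.2
    have hwl : (a.2.2.1 : ℕ) < ℓ := ha ▸ a.2.2.2.2
    refine ⟨?_, ?_, ?_, ?_⟩
    · intro z
      rw [hu3, hu3]
      simp only [ha, if_pos rfl]
      split <;> norm_num
    · intro w
      rw [hu4, hu4]
      simp only [ha, if_pos rfl]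
      split <;> norm_num
    · intro z
      constructor
      · intro h
        have := h ⟨(a.2.2.2 : ℕ), hzk⟩
        rw [hu3, hu3] at this
        simp only [if_pos rfl] at this
        by_contra hne
        have hzne : (z : ℕ) ≠ (a.2.2.2 : ℕ) := by
          intro hz
          exact hne (Fin.ext (hz.trans ha.symm))
        rw [if_neg hzne] at this
        norm_num at this
      · rintro rfl
        intro z'
        rw [hu3, hu3]
        simp only [ha, if_pos rfl]
        split <;> norm_num
    · intro w
      constructor
      · intro h
        have := h ⟨(a.2.2.1 : ℕ), hwl⟩
        rw [hu4, hu4] at this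
        simp only [if_pos rfl] at this
        by_contra hne
        have hwne : (a.2.2.1 : ℕ) ≠ (w : ℕ) := by
          intro hw
          exact hne (Fin.ext (ha ▸ hw).symm)
        rw [if_neg hwne] at this
        norm_num at this
      · rintro rfl
        intro w'
        rw [hu4, hu4]
        simp only [ha, if_pos rfl]
        split <;> norm_num
  have inv : ∀ a b : Fin 2 × Fin 2 × Fin k × Fin ℓ,
      (a.2.2.1 : ℕ) = 0 → (a.2.2.2 : ℕ) = 0 →
      Relation.ReflTransGen step a b →
      (b.2.2.1 : ℕ) = 0 ∧ (b.2.2.2 : ℕ) = 0 := by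
    intro a b h3 h4 hr
    induction hr with
    | refl => exact ⟨h3, h4⟩
    | @tail c d hr hs ih =>
      obtain ⟨hc3, hc4⟩ := ih
      have hcc : (c.2.2.1 : ℕ) = (c.2.2.2 : ℕ) := hc3.trans hc4.symm
      obtain ⟨hbr3, hbr4, _⟩ := key c hcc
      obtain ⟨_, _, hd3, hd4⟩ := hstep c d hs
      constructor
      · rw [hd3 hbr3]; exact hc3
      · rw [hd4 hbr4]; exact hc4
  refine ⟨key, inv, ?_⟩
  intro hr
  have := inv _ _ rfl rfl hr
  simp at this
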